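/- MEV characterization (completeness): Let σ be a system state and inv an invariant holding at σ and preserved by the semantics. If for every invariant-abiding state σ' there exists v with MEV σ' v, then there exists a guess function from invariant-abiding states to non-negative reals that is coherent at σ (some trace from σ extracts exactly guess σ) and sound (for every move from an invariant-abiding σ₀ to σ₁, gainState σ₀ σ₁ + guess σ₁ ≤ guess σ₀). -/

import Mathlib

open scoped NNReal

/-- A system state: the adversary's wallet together with an honest state. -/
structure SysState (Token State : Type) where
  Δ : Token → ℝ
  s : State

/-- A blockchain system model. -/
structure System where
  Token : Type
  State : Type
  Move : Type
  semantics : SysState Token State → Move → Option (SysState Token State)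
  honTokens : State → Token → ℝ≥0
  preserveTokens : ∀ (σ : SysState Token State) (m : Move),
    match semantics σ m with
    | .none => True
    | .some σ' => ∀ τ, (honTokens σ.s τ : ℝ) + σ.Δ τ = (honTokens σ'.s τ : ℝ) + σ'.Δ τ
  tokenValue : (Token → ℝ) → ℝ
  tokenValue_nonneg : ∀ f : Token → ℝ, (∀ τ, 0 ≤ f τ) → 0 ≤ tokenValue f
  tokenValue_additive : ∀ f g : Token → ℝ,
    tokenValue (f + g) = tokenValue f + tokenValue g

/-- Adversarial gain between two system states. -/
def gainState (sys : System) (σ σ' : SysState sys.Token sys.State) : ℝ :=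
  sys.tokenValue σ'.Δ - sys.tokenValue σ.Δ

/-- Composed effect of a list of moves (failing moves are skipped). -/
def semMoves (sys : System) (σ : SysState sys.Token sys.State) :
    List sys.Move → SysState sys.Token sys.State
  | [] => σ
  | m :: ms =>
    match sys.semantics σ m with
    | .none => semMoves sys σ ms
    | .some σ' => semMoves sys σ' ms

/-- Adversarial gain of a list of moves. -/
def gainMoves (sys : System) (σ : SysState sys.Token sys.State)
    (tr : List sys.Move) : ℝ :=
  gainState sys σ (semMoves sys σ tr)

/-- Maximal extractable value. -/
structure MEV (sys : System) (σ : SysState sys.Token sys.State) (v : ℝ) : Prop where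
  trace_reaches_v : ∃ tr, gainMoves sys σ tr = v
  other_traces_worse : ∀ tr, gainMoves sys σ tr ≤ v

/-- Least upper bound of the extractable values. -/
structure MEVsup (sys : System) (σ : SysState sys.Token sys.State) (v : ℝ) : Prop where
  traces_approx : ∀ ε : ℝ, 0 < ε → ∃ tr, v ≤ gainMoves sys σ tr + ε
  other_traces_worse : ∀ tr, gainMoves sys σ tr ≤ v

theorem MEV.characterization_complete (sys : System)
    (σ : SysState sys.Token sys.State)
    (inv : SysState sys.Token sys.State → Prop)
    (invariant_init : inv σ)
    (invariant_sound : ∀ {m : sys.Move} {σ₀ σ₁ : SysState sys.Token sys.State},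
      sys.semantics σ₀ m = some σ₁ → inv σ₀ → inv σ₁)
    (mev : ∀ σ', inv σ' → ∃ v, MEV sys σ' v) :
    ∃ guess : (σ' : SysState sys.Token sys.State) → inv σ' → ℝ≥0,
      -- guess is coherent
      (∃ tr : List sys.Move,
        gainMoves sys σ tr = guess σ invariant_init) ∧
      -- guess is sound
      (∀ {m : sys.Move} {σ₀ σ₁ : SysState sys.Token sys.State},
        (hmove : sys.semantics σ₀ m = some σ₁) → (σ₀_inv : inv σ₀) →
        gainState sys σ₀ σ₁ + (guess σ₁ (invariant_sound hmove σ₀_inv) : ℝ)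
          ≤ (guess σ₀ σ₀_inv : ℝ)) := by
  have hnn : ∀ (σ' : SysState sys.Token sys.State) (h : inv σ'),
      0 ≤ Classical.choose (mev σ' h) := by
    intro σ' h
    have := (Classical.choose_spec (mev σ' h)).other_traces_worse []
    simpa [gainMoves, semMoves, gainState] using this
  refine ⟨fun σ' h => ⟨Classical.choose (mev σ' h), hnn σ' h⟩, ?_, ?_⟩
  · obtain ⟨tr, htr⟩ := (Classical.choose_spec (mev σ invariant_init)).trace_reaches_v
    exact ⟨tr, htr⟩
  · intro m σ₀ σ₁ hmove σ₀_inv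
    obtain ⟨tr, htr⟩ :=
      (Classical.choose_spec (mev σ₁ (invariant_sound hmove σ₀_inv))).trace_reaches_v
    have hle := (Classical.choose_spec (mev σ₀ σ₀_inv)).other_traces_worse (m :: tr)
    have hsem : gainMoves sys σ₀ (m :: tr) = gainState sys σ₀ σ₁ + gainMoves sys σ₁ tr := by
      simp [gainMoves, semMoves, hmove, gainState]
    rw [hsem, htr] at hle
    exact hle
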